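/- arXiv:1203.4611 — 2 statements merged into one kernel-verified Lean document; each statement's English description precedes it below -/
import Mathlib

section
/- Let H be a graph of order k with at least one edge, let α = α(H), and for α+1 ≤ i ≤ k let ∇_i(H) = min{Δ(F) : F an induced subgraph of H on i vertices} and σ̃_i(H) = 2(k-i) + ∇_i(H) - 1. Then for every α+1 ≤ i ≤ k and n sufficiently large, σ(H,n) ≥ σ̃_i(H)·n - O(1); in particular σ(H,n) ≥ (max_i σ̃_i(H))·n - O(1). -/
open SimpleGraph Finset
open scoped Classical

noncomputable section

def IsGraphic {n : ℕ} (d : Fin n → ℕ) : Prop :=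
  ∃ G : SimpleGraph (Fin n), ∀ v, G.degree v = d v

def Potentially {k n : ℕ} (H : SimpleGraph (Fin k)) (d : Fin n → ℕ) : Prop :=
  ∃ G : SimpleGraph (Fin n), (∀ v, G.degree v = d v) ∧
    ∃ f : H →g G, Function.Injective f

/-- The independence number of a graph on `Fin k`. -/
def indepNum {k : ℕ} (H : SimpleGraph (Fin k)) : ℕ :=
  sSup {m | ∃ s : Finset (Fin k), s.card = m ∧
    ∀ a ∈ s, ∀ b ∈ s, a ≠ b → ¬ H.Adj a b}

/-- `∇_i(H)`: the minimum of the maximum degree over all induced subgraphs of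
`H` on `i` vertices. -/
def nabla {k : ℕ} (H : SimpleGraph (Fin k)) (i : ℕ) : ℕ :=
  sInf {m | ∃ s : Finset (Fin k), s.card = i ∧
    (H.induce (↑s : Set (Fin k))).maxDegree = m}

/-- `σ̃(H) = max{2(k-i)+∇_i(H)-1 : α(H)+1 ≤ i ≤ k}`. -/
def tildeSigma {k : ℕ} (H : SimpleGraph (Fin k)) : ℕ :=
  sSup ((fun i => 2 * (k - i) + nabla H i - 1) ''
    {i | _root_.indepNum H + 1 ≤ i ∧ i ≤ k})

/-- `σ(H,n)`: the minimum even integer `s` such that every `n`-term graphic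
sequence with sum at least `s` is potentially `H`-graphic. -/
def sigmaPot {k : ℕ} (H : SimpleGraph (Fin k)) (n : ℕ) : ℕ :=
  sInf {s | Even s ∧ ∀ d : Fin n → ℕ, Antitone d → IsGraphic d →
    s ≤ ∑ v, d v → Potentially H d}


/-- the degree of a low vertex at offset `j` -/
def lowDeg (n m D j : ℕ) : ℕ := m + min D (n - m - j / D * D) - 1

def dseq (n m D : ℕ) : ℕ → ℕ := fun x => if x < m then n - 1 else lowDeg n m D (x - m)

def G0 (n m D : ℕ) : SimpleGraph (Fin n) where
  Adj u v := u ≠ v ∧ ((u : ℕ) < m ∨ (v : ℕ) < m ∨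
    ((u : ℕ) - m) / D = ((v : ℕ) - m) / D)
  symm := by
    refine ⟨?_⟩; rintro u v ⟨h1, h2⟩
    exact ⟨h1.symm, by tauto⟩
  loopless := ⟨fun v h => h.1 rfl⟩

lemma G0_degree_high {n m D : ℕ} (v : Fin n) (hv : (v : ℕ) < m) :
    (G0 n m D).degree v = n - 1 := by
  have : (G0 n m D).neighborFinset v = univ.erase v := by
    ext u
    simp only [mem_neighborFinset, mem_erase, mem_univ, and_true]
    change (v ≠ u ∧ _) ↔ _
    constructor
    · rintro ⟨h1, _⟩; exact fun h => h1 (h ▸ rfl)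
    · intro h; exact ⟨fun h' => h (h' ▸ rfl), Or.inl hv⟩
  rw [← card_neighborFinset_eq_degree, this, card_erase_of_mem (mem_univ v),
    card_univ, Fintype.card_fin]


lemma adj_of_degree_eq_pred {n : ℕ} (G : SimpleGraph (Fin n)) (v : Fin n)
    (h : G.degree v = n - 1) (w : Fin n) (hw : w ≠ v) : G.Adj v w := by
  by_contra hadj
  have hsub : G.neighborFinset v ⊆ (univ.erase w).erase v := by
    intro u hu
    rw [mem_neighborFinset] at hu
    refine mem_erase.2 ⟨fun h' => ?_, mem_erase.2 ⟨fun h' => ?_, mem_univ u⟩⟩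
    · exact G.irrefl (h' ▸ hu)
    · exact hadj (h' ▸ hu)
  have hcard := card_le_card hsub
  rw [G.card_neighborFinset_eq_degree, h] at hcard
  have hvw : v ∈ univ.erase w := mem_erase.2 ⟨Ne.symm hw, mem_univ v⟩
  rw [card_erase_of_mem hvw, card_erase_of_mem (mem_univ w), card_univ, Fintype.card_fin] at hcard
  have : 0 < n := v.pos
  omega

lemma nat_div_eq_iff {D : ℕ} (hD : 0 < D) (a b : ℕ) :
    a / D = b ↔ b * D ≤ a ∧ a < b * D + D := by
  constructor
  · rintro rfl
    refine ⟨Nat.div_mul_le_self a D, ?_⟩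
    conv_lhs => rw [← Nat.div_add_mod a D]
    have := Nat.mod_lt a hD
    rw [Nat.mul_comm]
    omega
  · rintro ⟨h1, h2⟩
    exact Nat.div_eq_of_lt_le h1 (by rw [Nat.succ_mul]; omega)

lemma card_filter_val {n : ℕ} (p : ℕ → Prop) [DecidablePred p] :
    ((univ : Finset (Fin n)).filter (fun x => p x.val)).card =
      ((Finset.range n).filter p).card := by
  apply Finset.card_bij (fun a _ => a.val)
  · intro a ha
    simp only [mem_filter, mem_range] at *
    exact ⟨a.isLt, ha.2⟩
  · intro a _ b _ h; exact Fin.val_injective h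
  · intro b hb
    simp only [mem_filter, mem_range] at hb
    exact ⟨⟨b, hb.1⟩, by simp [hb.2], rfl⟩

lemma G0_degree_low {n m D : ℕ} (hD : 0 < D) (v : Fin n) (hv : m ≤ (v : ℕ)) :
    (G0 n m D).degree v = lowDeg n m D ((v : ℕ) - m) := by
  classical
  set b : ℕ := ((v : ℕ) - m) / D with hb
  have hbd : b * D ≤ (v : ℕ) - m ∧ (v : ℕ) - m < b * D + D := (nat_div_eq_iff hD _ b).1 hb.symm
  have hdeg : (G0 n m D).degree v =
      ((univ : Finset (Fin n)).filter (fun u : Fin n =>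
        (u : ℕ) ≠ (v : ℕ) ∧ ((u : ℕ) < m ∨ (m ≤ (u : ℕ) ∧ ((u : ℕ) - m) / D = b)))).card := by
    rw [← card_neighborFinset_eq_degree, neighborFinset_eq_filter]
    congr 1
    apply filter_congr
    intro u _
    simp only [G0]
    constructor
    · rintro ⟨h1, h2⟩
      refine ⟨fun h => h1 (Fin.ext h.symm), ?_⟩
      by_cases hum : (u : ℕ) < m
      · exact Or.inl hum
      rcases h2 with h | h | h
      · omega
      · omega
      · exact Or.inr ⟨by omega, h.symm⟩
    · rintro ⟨h1, h2⟩
      refine ⟨fun h => h1 (by rw [h]), ?_⟩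
      rcases h2 with h | ⟨h, h'⟩
      · exact Or.inr (Or.inl h)
      · exact Or.inr (Or.inr h'.symm)
  rw [hdeg, card_filter_val (fun x => x ≠ (v : ℕ) ∧ (x < m ∨ (m ≤ x ∧ (x - m) / D = b)))]
  have hsplit : ((Finset.range n).filter
      (fun x => x ≠ (v : ℕ) ∧ (x < m ∨ (m ≤ x ∧ (x - m) / D = b)))) =
      (Finset.range m) ∪ ((Finset.Ico (m + b * D) (min (m + b * D + D) n)).erase (v : ℕ)) := by
    ext x
    simp only [mem_filter, mem_range, mem_union, mem_erase, Finset.mem_Ico, lt_min_iff]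
    constructor
    · rintro ⟨hxn, hne, hx | ⟨hmx, hdiv⟩⟩
      · exact Or.inl hx
      · have := (nat_div_eq_iff hD (x - m) b).1 hdiv
        exact Or.inr ⟨hne, by omega, by omega, hxn⟩
    · rintro (hx | ⟨hne, h1, h2, h3⟩)
      · constructor
        · omega
        · exact ⟨by omega, Or.inl hx⟩
      · refine ⟨h3, hne, Or.inr ⟨by omega, (nat_div_eq_iff hD (x - m) b).2 ⟨by omega, by omega⟩⟩⟩
  rw [hsplit, card_union_of_disjoint, card_range, card_erase_of_mem, Nat.card_Ico]
  · have h1 : b * D ≤ (v : ℕ) - m := hbd.1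
    have h2 : (v : ℕ) - m < b * D + D := hbd.2
    have h3 : (v : ℕ) < n := v.isLt
    simp only [lowDeg]
    rw [← hb]
    have h4 : min D (n - m - b * D) = min D (n - m - b * D) := rfl
    generalize b * D = c at h1 h2 ⊢
    omega
  · simp only [Finset.mem_Ico, lt_min_iff]
    have h3 : (v : ℕ) < n := v.isLt
    omega
  · rw [Finset.disjoint_left]
    intro x hx hx2
    simp only [mem_range] at hx
    simp only [mem_erase, Finset.mem_Ico, lt_min_iff] at hx2
    omega

lemma dseq_realizes {n m D : ℕ} (hD : 0 < D) :
    ∀ v : Fin n, (G0 n m D).degree v = dseq n m D v.val := by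
  intro v
  by_cases hv : (v : ℕ) < m
  · rw [G0_degree_high v hv, dseq, if_pos hv]
  · rw [G0_degree_low hD v (by omega), dseq, if_neg hv]

lemma dseq_antitone {n m D : ℕ} (hD : 0 < D) (hmn : m + D ≤ n) :
    Antitone (fun v : Fin n => dseq n m D v.val) := by
  have key : ∀ x y : ℕ, x ≤ y → dseq n m D y ≤ dseq n m D x := by
    intro x y hxy
    by_cases hy : y < m
    · rw [dseq, dseq, if_pos hy, if_pos (by omega)]
    by_cases hx : x < m
    · rw [dseq, dseq, if_neg hy, if_pos hx, lowDeg]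
      have : min D (n - m - (y - m) / D * D) ≤ D := min_le_left _ _
      omega
    · rw [dseq, dseq, if_neg hy, if_neg hx, lowDeg, lowDeg]
      have hdiv : (x - m) / D ≤ (y - m) / D := Nat.div_le_div_right (by omega)
      have hmul : (x - m) / D * D ≤ (y - m) / D * D := Nat.mul_le_mul_right D hdiv
      generalize (x - m) / D * D = c1 at hmul ⊢
      generalize (y - m) / D * D = c2 at hmul ⊢
      omega
  intro v w hvw
  exact key v.val w.val hvw

lemma dseq_sum {n m D : ℕ} (hD : 0 < D) (hmn : m + D ≤ n) :
    (2 * m + D - 1) * n ≤ (∑ v : Fin n, dseq n m D v.val) + (m + (m + D) * (m + D)) := by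
  have hpt : ∀ x ∈ Finset.range n,
      (if x < m then n - 1 else 0) + (if ¬ x < m ∧ x + D ≤ n then m + D - 1 else 0)
        ≤ dseq n m D x := by
    intro x hx
    rw [mem_range] at hx
    by_cases h1 : x < m
    · simp [dseq, h1]
    by_cases h2 : x + D ≤ n
    · rw [if_neg h1, if_pos (show ¬ x < m ∧ x + D ≤ n from ⟨h1, h2⟩), dseq, if_neg h1, lowDeg]
      have hb : (x - m) / D * D ≤ x - m := Nat.div_mul_le_self _ _
      generalize (x - m) / D * D = c at hb ⊢
      omega
    · simp [h1, h2]
  have hsum : ∑ x ∈ Finset.range n,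
      ((if x < m then n - 1 else 0) + (if ¬ x < m ∧ x + D ≤ n then m + D - 1 else 0))
      ≤ ∑ x ∈ Finset.range n, dseq n m D x := Finset.sum_le_sum hpt
  rw [Finset.sum_add_distrib] at hsum
  have e1 : ∑ x ∈ Finset.range n, (if x < m then n - 1 else 0) = m * (n - 1) := by
    rw [← Finset.sum_filter]
    have : (Finset.range n).filter (fun x => x < m) = Finset.range m := by
      ext x; simp only [mem_filter, mem_range]; omega
    rw [this, Finset.sum_const, card_range, smul_eq_mul]
  have e2 : ∑ x ∈ Finset.range n, (if ¬ x < m ∧ x + D ≤ n then m + D - 1 else 0)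
      = (n + 1 - D - m) * (m + D - 1) := by
    rw [← Finset.sum_filter]
    have : (Finset.range n).filter (fun x => ¬ x < m ∧ x + D ≤ n)
        = Finset.Ico m (n + 1 - D) := by
      ext x; simp only [mem_filter, mem_range, Finset.mem_Ico]; omega
    rw [this, Finset.sum_const, Nat.card_Ico, smul_eq_mul]
  rw [e1, e2] at hsum
  have hfin : (2 * m + D - 1) * n ≤ m * (n - 1) + (n + 1 - D - m) * (m + D - 1)
      + (m + (m + D) * (m + D)) := by
    obtain ⟨e, rfl⟩ : ∃ e, D = e + 1 := ⟨D - 1, by omega⟩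
    obtain ⟨t, rfl⟩ : ∃ t, n = m + (e + 1) + t := ⟨n - (m + (e + 1)), by omega⟩
    have s1 : m + (e + 1) + t - 1 = m + e + t := by omega
    have s2 : m + (e + 1) + t + 1 - (e + 1) - m = t + 1 := by omega
    have s3 : 2 * m + (e + 1) - 1 = 2 * m + e := by omega
    have s4 : m + (e + 1) - 1 = m + e := by omega
    rw [s1, s2, s3, s4]
    nlinarith [sq_nonneg (m + e)]
  calc (2 * m + D - 1) * n ≤ m * (n - 1) + (n + 1 - D - m) * (m + D - 1)
      + (m + (m + D) * (m + D)) := hfin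
    _ ≤ (∑ x ∈ Finset.range n, dseq n m D x) + (m + (m + D) * (m + D)) := by
        exact Nat.add_le_add_right hsum _
    _ = (∑ v : Fin n, dseq n m D v.val) + (m + (m + D) * (m + D)) := by
        rw [Fin.sum_univ_eq_sum_range (fun x => dseq n m D x)]

lemma induce_adj' {k : ℕ} (H : SimpleGraph (Fin k)) (s : Finset (Fin k))
    (a b : (↑s : Set (Fin k))) : (H.induce (↑s : Set (Fin k))).Adj a b ↔ H.Adj a.val b.val := by
  rfl

lemma nabla_mem {k : ℕ} (H : SimpleGraph (Fin k)) (i : ℕ) (hik : i ≤ k) :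
    ∃ s : Finset (Fin k), s.card = i ∧ (H.induce (↑s : Set (Fin k))).maxDegree = nabla H i := by
  obtain ⟨s, -, hs⟩ := Finset.exists_subset_card_eq
    (show i ≤ (univ : Finset (Fin k)).card by simpa using hik)
  have hne : {m | ∃ s : Finset (Fin k), s.card = i ∧
      (H.induce (↑s : Set (Fin k))).maxDegree = m}.Nonempty :=
    ⟨(H.induce (↑s : Set (Fin k))).maxDegree, s, hs, rfl⟩
  obtain ⟨s₀, hc, hm⟩ := Nat.sInf_mem hne
  exact ⟨s₀, hc, hm⟩

lemma nabla_le_of_card {k : ℕ} (H : SimpleGraph (Fin k)) (i : ℕ) (s : Finset (Fin k))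
    (hs : s.card = i) : nabla H i ≤ (H.induce (↑s : Set (Fin k))).maxDegree :=
  Nat.sInf_le ⟨s, hs, rfl⟩

lemma indepNum_bddAbove {k : ℕ} (H : SimpleGraph (Fin k)) :
    ∀ m ∈ {m | ∃ s : Finset (Fin k), s.card = m ∧
      ∀ a ∈ s, ∀ b ∈ s, a ≠ b → ¬ H.Adj a b}, m ≤ k := by
  rintro m ⟨s, hc, -⟩
  rw [← hc]
  simpa using Finset.card_le_univ s

lemma nabla_pos {k : ℕ} (H : SimpleGraph (Fin k)) (i : ℕ)
    (hα : _root_.indepNum H + 1 ≤ i) (hik : i ≤ k) : 0 < nabla H i := by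
  rcases Nat.eq_zero_or_pos (nabla H i) with h0 | h
  · exfalso
    obtain ⟨s₀, hc, hm⟩ := nabla_mem H i hik
    rw [h0] at hm
    have hindep : ∀ a ∈ s₀, ∀ b ∈ s₀, a ≠ b → ¬ H.Adj a b := by
      intro a ha b hb hab hadj
      have hadj' : (H.induce (↑s₀ : Set (Fin k))).Adj ⟨a, ha⟩ ⟨b, hb⟩ :=
        (induce_adj' H s₀ _ _).2 hadj
      have h1 : 0 < (H.induce (↑s₀ : Set (Fin k))).degree ⟨a, ha⟩ := by
        rw [← SimpleGraph.card_neighborFinset_eq_degree]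
        exact Finset.card_pos.2 ⟨⟨b, hb⟩, (SimpleGraph.mem_neighborFinset _ _ _).2 hadj'⟩
      have h2 := SimpleGraph.degree_le_maxDegree (H.induce (↑s₀ : Set (Fin k))) ⟨a, ha⟩
      omega
    have hle : i ≤ _root_.indepNum H :=
      le_csSup ⟨k, fun m hm => indepNum_bddAbove H m hm⟩ ⟨s₀, hc, hindep⟩
    omega
  · exact h

lemma card_high {n m : ℕ} (hmn : m ≤ n) :
    ((univ : Finset (Fin n)).filter (fun x : Fin n => (x : ℕ) < m)).card = m := by
  rw [card_filter_val (fun x => x < m)]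
  have : (Finset.range n).filter (fun x => x < m) = Finset.range m := by
    ext x; simp only [mem_filter, mem_range]; omega
  rw [this, card_range]

lemma no_embed {k n m D : ℕ} (H : SimpleGraph (Fin k)) (i : ℕ)
    (hm : m = k - i) (hik : i ≤ k) (hi1 : 1 ≤ i) (hDpos : 0 < D)
    (hDle : D ≤ nabla H i) (hkn : k ≤ n)
    (G : SimpleGraph (Fin n)) (hdeg : ∀ v, G.degree v = dseq n m D v.val)
    (f : H →g G) (hf : Function.Injective f) : False := by
  classical
  have hmn : m ≤ n := by omega
  set A : Finset (Fin k) := univ.filter (fun v : Fin k => ((f v : Fin n) : ℕ) < m) with hA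
  have hAcard : A.card ≤ m := by
    have himg : A.image f ⊆ (univ : Finset (Fin n)).filter (fun x : Fin n => (x : ℕ) < m) := by
      intro x hx
      obtain ⟨v, hv, rfl⟩ := Finset.mem_image.1 hx
      rw [hA, mem_filter] at hv
      exact mem_filter.2 ⟨mem_univ _, hv.2⟩
    calc A.card = (A.image f).card := (Finset.card_image_of_injective A hf).symm
      _ ≤ _ := card_le_card himg
      _ = m := card_high hmn
  set Low : Finset (Fin k) := univ.filter (fun v : Fin k => ¬ ((f v : Fin n) : ℕ) < m) with hLow
  have hLowcard : i ≤ Low.card := by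
    have : Low = univ \ A := by
      rw [hLow, hA, Finset.filter_not]
    rw [this, card_sdiff_of_subset (subset_univ A), card_univ, Fintype.card_fin]
    omega
  obtain ⟨s, hsLow, hscard⟩ := Finset.exists_subset_card_eq hLowcard
  have hD2 : D ≤ (H.induce (↑s : Set (Fin k))).maxDegree :=
    le_trans hDle (nabla_le_of_card H i s hscard)
  have hsne : Nonempty (↑(↑s : Set (Fin k))) := by
    obtain ⟨a, ha⟩ := Finset.card_pos.1 (by omega : 0 < s.card)
    exact ⟨⟨a, ha⟩⟩
  obtain ⟨u, hu⟩ := (H.induce (↑s : Set (Fin k))).exists_maximal_degree_vertex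
  have hudeg : D ≤ (H.induce (↑s : Set (Fin k))).degree u := hu ▸ hD2
  set nbhd := (H.induce (↑s : Set (Fin k))).neighborFinset u with hnbhd
  have hnbhdcard : D ≤ nbhd.card := by
    rw [hnbhd, SimpleGraph.card_neighborFinset_eq_degree]; exact hudeg
  set T : Finset (Fin n) := nbhd.image (fun w => f w.val) with hT
  have hTcard : T.card = nbhd.card := by
    rw [hT]
    apply Finset.card_image_of_injective
    intro a b hab
    exact Subtype.ext (hf hab)
  set Hi : Finset (Fin n) := univ.filter (fun x : Fin n => (x : ℕ) < m) with hHi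
  have hfu_low : ¬ ((f u.val : Fin n) : ℕ) < m := by
    have : u.val ∈ Low := hsLow u.property
    rw [hLow, mem_filter] at this
    exact this.2
  have hsub : T ∪ Hi ⊆ G.neighborFinset (f u.val) := by
    intro x hx
    rcases Finset.mem_union.1 hx with hx | hx
    · obtain ⟨w, hw, rfl⟩ := Finset.mem_image.1 hx
      rw [hnbhd, SimpleGraph.mem_neighborFinset] at hw
      have : H.Adj u.val w.val := (induce_adj' H s u w).1 hw
      exact (SimpleGraph.mem_neighborFinset _ _ _).2 (f.map_adj this)
    · rw [hHi, mem_filter] at hx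
      have hxdeg : G.degree x = n - 1 := by
        rw [hdeg x, dseq, if_pos hx.2]
      have hxne : f u.val ≠ x := by
        intro h; rw [h] at hfu_low; exact hfu_low hx.2
      exact (SimpleGraph.mem_neighborFinset _ _ _).2
        ((adj_of_degree_eq_pred G x hxdeg (f u.val) hxne).symm)
  have hdisj : Disjoint T Hi := by
    rw [Finset.disjoint_left]
    intro x hxT hxHi
    obtain ⟨w, hw, rfl⟩ := Finset.mem_image.1 hxT
    have hwlow : w.val ∈ Low := hsLow w.property
    rw [hLow, mem_filter] at hwlow
    rw [hHi, mem_filter] at hxHi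
    exact hwlow.2 hxHi.2
  have hdegge : m + D ≤ G.degree (f u.val) := by
    have h1 := card_le_card hsub
    rw [Finset.card_union_of_disjoint hdisj, SimpleGraph.card_neighborFinset_eq_degree] at h1
    have h2 : Hi.card = m := card_high hmn
    omega
  have hdegle : G.degree (f u.val) ≤ m + D - 1 := by
    rw [hdeg, dseq, if_neg hfu_low, lowDeg]
    have : min D (n - m - (((f u.val : Fin n) : ℕ) - m) / D * D) ≤ D := min_le_left _ _
    omega
  omega

lemma even_nn2 (n : ℕ) : Even (n * (n - 1) + 2) := by
  have h : Even (n * (n - 1)) := by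
    match n with
    | 0 => simp
    | t + 1 =>
      simpa [Nat.mul_comm] using Nat.even_mul_succ_self t
  exact h.add (by decide)

lemma sigmaSet_nonempty {k n : ℕ} (H : SimpleGraph (Fin k)) :
    {s | Even s ∧ ∀ d : Fin n → ℕ, Antitone d → IsGraphic d →
      s ≤ ∑ v, d v → Potentially H d}.Nonempty := by
  refine ⟨n * (n - 1) + 2, even_nn2 n, ?_⟩
  intro d hanti hgr hle
  exfalso
  obtain ⟨G, hG⟩ := hgr
  have hbd : ∀ v : Fin n, d v ≤ n - 1 := by
    intro v
    rw [← hG v]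
    have := G.degree_lt_card_verts v
    rw [Fintype.card_fin] at this
    omega
  have hsum : (∑ v, d v) ≤ n * (n - 1) := by
    calc (∑ v, d v) ≤ (univ : Finset (Fin n)).card • (n - 1) :=
          Finset.sum_le_card_nsmul _ _ _ (fun v _ => hbd v)
      _ = n * (n - 1) := by rw [card_univ, Fintype.card_fin, smul_eq_mul]
  omega

lemma main_part1 {k : ℕ} (H : SimpleGraph (Fin k)) (i : ℕ)
    (hα : _root_.indepNum H + 1 ≤ i) (hik : i ≤ k) :
    ∀ n, (k - i) + nabla H i + k ≤ n →
      (2 * (k - i) + nabla H i - 1) * n ≤ sigmaPot H n +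
        ((k - i) + ((k - i) + nabla H i) * ((k - i) + nabla H i)) := by
  set m := k - i with hm
  set D := nabla H i with hD
  have hDpos : 0 < D := nabla_pos H i hα hik
  have hi1 : 1 ≤ i := by omega
  intro n hn
  have hmD : m + D ≤ n := by omega
  have hkn : k ≤ n := by omega
  set C := m + (m + D) * (m + D) with hC
  by_contra hcon
  push_neg at hcon
  have hmem := Nat.sInf_mem (sigmaSet_nonempty H (n := n))
  rw [show sInf {s | Even s ∧ ∀ d : Fin n → ℕ, Antitone d → IsGraphic d →
      s ≤ ∑ v, d v → Potentially H d} = sigmaPot H n from rfl] at hmem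
  obtain ⟨-, hall⟩ := hmem
  have hsum := dseq_sum (n := n) (m := m) (D := D) hDpos hmD
  have hslt : sigmaPot H n ≤ ∑ v : Fin n, dseq n m D v.val := by omega
  have hpot : Potentially H (fun v : Fin n => dseq n m D v.val) :=
    hall _ (dseq_antitone hDpos hmD) ⟨G0 n m D, dseq_realizes hDpos⟩ hslt
  obtain ⟨G, hdegs, f, hf⟩ := hpot
  exact no_embed H i hm hik hi1 hDpos (le_of_eq hD) hkn G hdegs f hf

lemma nabla_lt {k : ℕ} (H : SimpleGraph (Fin k)) (i : ℕ) (hi1 : 1 ≤ i) (hik : i ≤ k) :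
    nabla H i < i := by
  obtain ⟨s, hc, hmax⟩ := nabla_mem H i hik
  have hsne : Nonempty (↑(↑s : Set (Fin k))) := by
    obtain ⟨a, ha⟩ := Finset.card_pos.1 (by omega : 0 < s.card)
    exact ⟨⟨a, ha⟩⟩
  obtain ⟨v, hv⟩ := (H.induce (↑s : Set (Fin k))).exists_maximal_degree_vertex
  have := (H.induce (↑s : Set (Fin k))).degree_lt_card_verts v
  rw [← hv, hmax] at this
  have hcard : Fintype.card (↑(↑s : Set (Fin k))) = i := by
    rw [← hc]
    exact Fintype.card_coe s
  omega

/-- for a graph `H` of order `k` with at least one edge, for each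
`α(H)+1 ≤ i ≤ k` one has `σ(H,n) ≥ σ̃_i(H)·n - O(1)`, and in particular
`σ(H,n) ≥ (max_i σ̃_i(H))·n - O(1)`. -/
theorem stmt14 (k : ℕ) (H : SimpleGraph (Fin k)) (hne : H ≠ ⊥) :
    (∀ i : ℕ, _root_.indepNum H + 1 ≤ i → i ≤ k →
      ∃ C N : ℕ, ∀ n, N ≤ n →
        (2 * (k - i) + nabla H i - 1) * n ≤ sigmaPot H n + C) ∧
    (∃ C N : ℕ, ∀ n, N ≤ n → tildeSigma H * n ≤ sigmaPot H n + C) := by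
  have hpart1 : ∀ i : ℕ, _root_.indepNum H + 1 ≤ i → i ≤ k →
      ∃ C N : ℕ, ∀ n, N ≤ n →
        (2 * (k - i) + nabla H i - 1) * n ≤ sigmaPot H n + C := by
    intro i hα hik
    exact ⟨(k - i) + ((k - i) + nabla H i) * ((k - i) + nabla H i),
      (k - i) + nabla H i + k, main_part1 H i hα hik⟩
  refine ⟨hpart1, ?_⟩
  -- H has an edge
  obtain ⟨a, b, hab⟩ : ∃ a b, H.Adj a b := by
    by_contra hno
    push_neg at hno
    exact hne (by ext a b; simp [hno a b])
  have hαk : _root_.indepNum H + 1 ≤ k := by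
    have hk1 : 1 ≤ k := a.pos
    have hbdd : ∀ M ∈ {M | ∃ s : Finset (Fin k), s.card = M ∧
        ∀ x ∈ s, ∀ y ∈ s, x ≠ y → ¬ H.Adj x y}, M ≤ k - 1 := by
      rintro M ⟨s, hc, hind⟩
      by_contra hM
      push_neg at hM
      have hMk : M ≤ k := by
        rw [← hc]; simpa using Finset.card_le_univ s
      have hMeq : M = k := by omega
      have hsuniv : s = univ := by
        apply Finset.eq_univ_of_card
        rw [hc, hMeq, Fintype.card_fin]
      exact hind a (hsuniv ▸ mem_univ a) b (hsuniv ▸ mem_univ b) hab.ne hab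
    have h0 : (0 : ℕ) ∈ {M | ∃ s : Finset (Fin k), s.card = M ∧
        ∀ x ∈ s, ∀ y ∈ s, x ≠ y → ¬ H.Adj x y} := ⟨∅, by simp⟩
    have := csSup_le ⟨0, h0⟩ hbdd
    rw [_root_.indepNum]
    omega
  -- the image set
  set f : ℕ → ℕ := fun i => 2 * (k - i) + nabla H i - 1 with hf
  set dom : Set ℕ := {i | _root_.indepNum H + 1 ≤ i ∧ i ≤ k} with hdom
  have hkdom : k ∈ dom := ⟨hαk, le_refl k⟩
  have hbddim : ∀ x ∈ f '' dom, x ≤ 3 * k := by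
    rintro x ⟨i, ⟨hi1, hi2⟩, rfl⟩
    have h1 : 1 ≤ i := by omega
    have := nabla_lt H i h1 hi2
    show 2 * (k - i) + nabla H i - 1 ≤ 3 * k
    omega
  have hmem : tildeSigma H ∈ f '' dom := by
    rw [tildeSigma]
    apply Nat.sSup_mem ⟨f k, Set.mem_image_of_mem f hkdom⟩ ⟨3 * k, hbddim⟩
  obtain ⟨i₀, ⟨hi1, hi2⟩, hfi⟩ := hmem
  obtain ⟨C, N, hCN⟩ := hpart1 i₀ hi1 hi2
  exact ⟨C, N, fun n hn => by rw [← hfi]; exact hCN n hn⟩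
end
end

section
/- Let G be a graph, S ⊆ V(G) with |S| = k, and let α, ℓ be positive integers with ℓ = 2·C(k-α,2) + α. Suppose there exist an independent set {w_1,...,w_ℓ} ⊆ V(G)∖S and a (k-α)-element subset Ŝ of S such that each w_i is adjacent to every vertex of Ŝ. Then some sequence of 2-switches transforms G into a graph with the same degree sequence that contains K_{k-α} ∨ \overline{K_α} as a subgraph. -/
open SimpleGraph
open scoped Classical
open Finset



/-- The split graph `K_r ∨ K̄_s`: the join of a complete graph on `r` vertices
with an edgeless graph on `s` vertices. -/
def splitGraph (r s : ℕ) : SimpleGraph (Fin (r + s)) :=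
  SimpleGraph.fromRel (fun a _ => (a : ℕ) < r)

/-- `G'` is obtained from `G` by a single 2-switch: edges `ua, vb` are replaced
by edges `uv, ab` (where `uv, ab` were nonedges and `u,v,a,b` are distinct). -/
def TwoSwitch {V : Type*} (G G' : SimpleGraph V) : Prop :=
  ∃ u v a b : V, u ≠ v ∧ a ≠ b ∧ u ≠ a ∧ u ≠ b ∧ v ≠ a ∧ v ≠ b ∧
    G.Adj u a ∧ G.Adj v b ∧ ¬ G.Adj u v ∧ ¬ G.Adj a b ∧
    G' = (G.deleteEdges {s(u, a), s(v, b)}) ⊔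
      SimpleGraph.fromEdgeSet {s(u, v), s(a, b)}

section Aux

private lemma switch_adj {V : Type*} (G : SimpleGraph V) (u v a b x y : V) :
    ((G.deleteEdges {s(u,a), s(v,b)}) ⊔ SimpleGraph.fromEdgeSet {s(u,v), s(a,b)}).Adj x y ↔
      (G.Adj x y ∧ ¬((x=u∧y=a)∨(x=a∧y=u)) ∧ ¬((x=v∧y=b)∨(x=b∧y=v))) ∨
      ((((x=u∧y=v)∨(x=v∧y=u))∨((x=a∧y=b)∨(x=b∧y=a))) ∧ x ≠ y) := by
  simp only [SimpleGraph.sup_adj, SimpleGraph.deleteEdges_adj, SimpleGraph.fromEdgeSet_adj,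
    Set.mem_insert_iff, Set.mem_singleton_iff, Sym2.eq_iff, not_or]

private lemma card_insert_erase {α : Type*} [DecidableEq α] (s : Finset α) (p q : α)
    (hp : p ∈ s) (hq : q ∉ s) : (insert q (s.erase p)).card = s.card := by
  rw [Finset.card_insert_of_notMem (fun h => hq (Finset.mem_of_mem_erase h)),
    Finset.card_erase_of_mem hp]
  have := Finset.card_pos.mpr ⟨p, hp⟩
  omega

private lemma switch_nbr {V : Type*} [Fintype V] (G : SimpleGraph V) (u v a b : V)
    (huv : u ≠ v) (hua : u ≠ a) (hub : u ≠ b) :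
    ((G.deleteEdges {s(u,a), s(v,b)}) ⊔
        SimpleGraph.fromEdgeSet {s(u,v), s(a,b)}).neighborFinset u
      = insert v ((G.neighborFinset u).erase a) := by
  classical
  ext t
  rw [mem_neighborFinset, switch_adj, Finset.mem_insert, Finset.mem_erase, mem_neighborFinset]
  constructor
  · rintro (⟨h, h1, _⟩ | ⟨(⟨_,rfl⟩|⟨h1,_⟩)|(⟨h1,_⟩|⟨h1,_⟩), _⟩)
    · right; exact ⟨fun hh => h1 (Or.inl ⟨rfl, hh⟩), h⟩
    · left; rfl
    · exact absurd h1 huv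
    · exact absurd h1 hua
    · exact absurd h1 hub
  · rintro (rfl | ⟨hna, h⟩)
    · exact Or.inr ⟨Or.inl (Or.inl ⟨rfl, rfl⟩), huv⟩
    · refine Or.inl ⟨h, ?_, ?_⟩
      · rintro (⟨_, h2⟩ | ⟨h1, _⟩); exact hna h2; exact hua h1
      · rintro (⟨h1, _⟩ | ⟨h1, _⟩); exact huv h1; exact hub h1

private lemma switch_nbr_other {V : Type*} [Fintype V] (G : SimpleGraph V) (u v a b z : V)
    (hzu : z ≠ u) (hzv : z ≠ v) (hza : z ≠ a) (hzb : z ≠ b) :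
    ((G.deleteEdges {s(u,a), s(v,b)}) ⊔
        SimpleGraph.fromEdgeSet {s(u,v), s(a,b)}).neighborFinset z
      = G.neighborFinset z := by
  classical
  ext t
  rw [mem_neighborFinset, switch_adj, mem_neighborFinset]
  constructor
  · rintro (⟨h, _, _⟩ | ⟨(⟨h1,_⟩|⟨h1,_⟩)|(⟨h1,_⟩|⟨h1,_⟩), _⟩)
    · exact h
    · exact absurd h1 hzu
    · exact absurd h1 hzv
    · exact absurd h1 hza
    · exact absurd h1 hzb
  · intro h
    refine Or.inl ⟨h, ?_, ?_⟩
    · rintro (⟨h1, _⟩ | ⟨h1, _⟩); exact hzu h1; exact hza h1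
    · rintro (⟨h1, _⟩ | ⟨h1, _⟩); exact hzv h1; exact hzb h1

private lemma switch_degree {V : Type*} [Fintype V] (G : SimpleGraph V) (u v a b : V)
    (huv : u ≠ v) (hab : a ≠ b) (hua : u ≠ a) (hub : u ≠ b) (hva : v ≠ a) (hvb : v ≠ b)
    (hGua : G.Adj u a) (hGvb : G.Adj v b) (hGuv : ¬ G.Adj u v) (hGab : ¬ G.Adj a b)
    (z : V) :
    ((G.deleteEdges {s(u,a), s(v,b)}) ⊔ SimpleGraph.fromEdgeSet {s(u,v), s(a,b)}).degree z
      = G.degree z := by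
  classical
  have e1 : ({s(u,a),s(v,b)} : Set (Sym2 V)) = {s(v,b),s(u,a)} := Set.pair_comm _ _
  have e2 : ({s(u,v),s(a,b)} : Set (Sym2 V)) = {s(v,u),s(b,a)} := by
    rw [Sym2.eq_swap, @Sym2.eq_swap _ a b]
  have e3 : ({s(u,a),s(v,b)} : Set (Sym2 V)) = {s(a,u),s(b,v)} := by
    rw [Sym2.eq_swap, @Sym2.eq_swap _ v b]
  have e4 : ({s(u,v),s(a,b)} : Set (Sym2 V)) = {s(a,b),s(u,v)} := Set.pair_comm _ _
  have e5 : ({s(u,a),s(v,b)} : Set (Sym2 V)) = {s(b,v),s(a,u)} := by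
    rw [e3]; exact Set.pair_comm _ _
  have e6 : ({s(u,v),s(a,b)} : Set (Sym2 V)) = {s(b,a),s(v,u)} := by
    rw [e2]; exact Set.pair_comm _ _
  simp only [SimpleGraph.degree]
  by_cases hzu : z = u
  · subst hzu
    rw [switch_nbr G z v a b huv hua hub]
    exact card_insert_erase _ a v ((mem_neighborFinset ..).mpr hGua)
      (fun h => hGuv ((mem_neighborFinset ..).mp h))
  · by_cases hzv : z = v
    · subst hzv
      rw [e1, e2, switch_nbr G z u b a huv.symm hvb hva]
      exact card_insert_erase _ b u ((mem_neighborFinset ..).mpr hGvb)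
        (fun h => hGuv (((mem_neighborFinset ..).mp h).symm))
    · by_cases hza : z = a
      · subst hza
        rw [e3, e4, switch_nbr G z b u v hab hua.symm hva.symm]
        exact card_insert_erase _ u b ((mem_neighborFinset ..).mpr hGua.symm)
          (fun h => hGab ((mem_neighborFinset ..).mp h))
      · by_cases hzb : z = b
        · subst hzb
          rw [e5, e6, switch_nbr G z a v u hab.symm hvb.symm hub.symm]
          exact card_insert_erase _ v a ((mem_neighborFinset ..).mpr hGvb.symm)
            (fun h => hGab (((mem_neighborFinset ..).mp h).symm))
        · rw [switch_nbr_other G u v a b z hzu hzv hza hzb]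

private lemma base_emb {V : Type*} [Fintype V] (G : SimpleGraph V) (T : Finset V) (α n : ℕ)
    (w : Fin n → V) (hwinj : Function.Injective w) (hwT : ∀ j, w j ∉ T)
    (hadj : ∀ j, ∀ x ∈ T, G.Adj (w j) x)
    (hclique : ∀ x ∈ T, ∀ y ∈ T, x ≠ y → G.Adj x y)
    (hn : α ≤ n) :
    ∃ f : splitGraph T.card α →g G, Function.Injective f := by
  classical
  set g : Fin T.card → V := fun i => (T.equivFin.symm i : V) with hg
  have hg_mem : ∀ i, g i ∈ T := fun i => (T.equivFin.symm i).2
  have hg_inj : Function.Injective g := by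
    intro i j h
    exact T.equivFin.symm.injective (Subtype.ext h)
  have hidx : ∀ i : Fin (T.card + α), ¬ (i : ℕ) < T.card → (i : ℕ) - T.card < n := by
    intro i h; have := i.isLt; omega
  set F : Fin (T.card + α) → V := fun i =>
    if h : (i : ℕ) < T.card then g ⟨i, h⟩ else w ⟨(i : ℕ) - T.card, hidx i h⟩ with hF
  have hmap : ∀ i j, (splitGraph T.card α).Adj i j → G.Adj (F i) (F j) := by
    intro i j hij
    simp only [splitGraph, SimpleGraph.fromRel_adj] at hij
    obtain ⟨hne, hor⟩ := hij
    by_cases hi : (i : ℕ) < T.card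
    · by_cases hj : (j : ℕ) < T.card
      · simp only [hF, dif_pos hi, dif_pos hj]
        refine hclique _ (hg_mem _) _ (hg_mem _) ?_
        intro h
        have h2 := hg_inj h
        rw [Fin.mk.injEq] at h2
        exact hne (Fin.ext h2)
      · simp only [hF, dif_pos hi, dif_neg hj]
        exact (hadj _ _ (hg_mem _)).symm
    · by_cases hj : (j : ℕ) < T.card
      · simp only [hF, dif_neg hi, dif_pos hj]
        exact hadj _ _ (hg_mem _)
      · exact absurd hor (by tauto)
  refine ⟨⟨F, fun {i j} h => hmap i j h⟩, ?_⟩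
  intro i j h
  have h : F i = F j := h
  by_cases hi : (i : ℕ) < T.card <;> by_cases hj : (j : ℕ) < T.card <;>
    simp only [hF, dif_pos, dif_neg, hi, hj] at h
  · have h2 := hg_inj h
    rw [Fin.mk.injEq] at h2
    exact Fin.ext h2
  · exact absurd (h ▸ hg_mem ⟨i, hi⟩) (hwT _)
  · exact absurd (h.symm ▸ hg_mem ⟨j, hj⟩) (hwT _)
  · have := congrArg Fin.val (hwinj h)
    simp only at this
    have hi' := i.isLt; have hj' := j.isLt
    exact Fin.ext (by omega)

private lemma key {V : Type*} [Fintype V] (α : ℕ) :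
    ∀ m : ℕ, ∀ (G : SimpleGraph V) (T : Finset V) (n : ℕ) (w : Fin n → V),
      Function.Injective w → (∀ j, w j ∉ T) →
      (∀ j j', j ≠ j' → ¬ G.Adj (w j) (w j')) →
      (∀ j, ∀ x ∈ T, G.Adj (w j) x) →
      ((T.offDiag.filter fun p => ¬ G.Adj p.1 p.2).card ≤ 2*m) →
      2*m + α ≤ n →
      ∃ G', Relation.ReflTransGen TwoSwitch G G' ∧
        (∀ v, G'.degree v = G.degree v) ∧
        ∃ f : splitGraph T.card α →g G', Function.Injective f := by
  intro m
  induction m with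
  | zero =>
    intro G T n w hwinj hwT hindep hadj hfilt hn
    have hclique : ∀ x ∈ T, ∀ y ∈ T, x ≠ y → G.Adj x y := by
      intro x hx y hy hxy
      by_contra hne
      have hmem : (x,y) ∈ T.offDiag.filter (fun p => ¬ G.Adj p.1 p.2) := by
        rw [Finset.mem_filter, Finset.mem_offDiag]
        exact ⟨⟨hx, hy, hxy⟩, hne⟩
      have := Finset.card_pos.mpr ⟨_, hmem⟩
      omega
    obtain ⟨f, hf⟩ := base_emb G T α n w hwinj hwT hadj hclique (by omega)
    exact ⟨G, Relation.ReflTransGen.refl, fun v => rfl, f, hf⟩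
  | succ m ih =>
    intro G T n w hwinj hwT hindep hadj hfilt hn
    by_cases hle : (T.offDiag.filter fun p => ¬ G.Adj p.1 p.2).card ≤ 2*m
    · exact ih G T n w hwinj hwT hindep hadj hle (by omega)
    push_neg at hle
    have hnonempty : (T.offDiag.filter fun p => ¬ G.Adj p.1 p.2).Nonempty :=
      Finset.card_pos.mp (by omega)
    obtain ⟨p, hp⟩ := hnonempty
    rw [Finset.mem_filter, Finset.mem_offDiag] at hp
    obtain ⟨⟨hx, hy, hxy⟩, hnadj⟩ := hp
    set x := p.1 with hxdef
    set y := p.2 with hydef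
    have h2n : 1 < n := by omega
    set i0 : Fin n := ⟨0, by omega⟩ with hi0
    set i1 : Fin n := ⟨1, by omega⟩ with hi1
    set w0 := w i0 with hw0
    set w1 := w i1 with hw1
    have hi01 : i0 ≠ i1 := by simp [hi0, hi1, Fin.ext_iff]
    have hw01 : w0 ≠ w1 := fun h => hi01 (hwinj h)
    have hw0x : w0 ≠ x := fun h => hwT i0 (by rw [← hw0, h]; exact hx)
    have hw0y : w0 ≠ y := fun h => hwT i0 (by rw [← hw0, h]; exact hy)
    have hw1x : w1 ≠ x := fun h => hwT i1 (by rw [← hw1, h]; exact hx)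
    have hw1y : w1 ≠ y := fun h => hwT i1 (by rw [← hw1, h]; exact hy)
    have hA0x : G.Adj w0 x := hadj i0 x hx
    have hA1y : G.Adj w1 y := hadj i1 y hy
    have hN01 : ¬ G.Adj w0 w1 := hindep i0 i1 hi01
    set G₁ := (G.deleteEdges {s(w0,x), s(w1,y)}) ⊔
      SimpleGraph.fromEdgeSet {s(w0,w1), s(x,y)} with hG₁
    have hsw : TwoSwitch G G₁ :=
      ⟨w0, w1, x, y, hw01, hxy, hw0x, hw0y, hw1x, hw1y, hA0x, hA1y, hN01, hnadj, rfl⟩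
    -- the new list of independent vertices
    set w' : Fin (n-2) → V := fun j => w ⟨(j : ℕ) + 2, by have := j.isLt; omega⟩ with hw'
    have hw'inj : Function.Injective w' := by
      intro i j h
      have := hwinj h
      rw [Fin.mk.injEq] at this
      exact Fin.ext (by omega)
    have hw'T : ∀ j, w' j ∉ T := fun j => hwT _
    have hw'ne0 : ∀ j : Fin (n-2), w' j ≠ w0 := by
      intro j h
      have := hwinj h
      rw [hi0, Fin.mk.injEq] at this
      omega
    have hw'ne1 : ∀ j : Fin (n-2), w' j ≠ w1 := by
      intro j h
      have := hwinj h
      rw [hi1, Fin.mk.injEq] at this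
      omega
    have hw'indep : ∀ j j', j ≠ j' → ¬ G₁.Adj (w' j) (w' j') := by
      intro j j' hne hadj'
      rw [hG₁, switch_adj] at hadj'
      rcases hadj' with ⟨h, _, _⟩ | ⟨(⟨h1,_⟩|⟨h1,_⟩)|(⟨h1,_⟩|⟨h1,_⟩), _⟩
      · refine hindep _ _ ?_ h
        intro hh
        rw [Fin.mk.injEq] at hh
        exact hne (Fin.ext (by omega))
      · exact hw'ne0 j h1
      · exact hw'ne1 j h1
      · exact hw'T j (by rw [h1]; exact hx)
      · exact hw'T j (by rw [h1]; exact hy)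
    have hw'adj : ∀ j, ∀ z ∈ T, G₁.Adj (w' j) z := by
      intro j z hz
      rw [hG₁, switch_adj]
      left
      refine ⟨hadj _ z hz, ?_, ?_⟩
      · rintro (⟨h1, _⟩ | ⟨h1, _⟩); exact hw'ne0 j h1; exact hw'T j (by rw [h1]; exact hx)
      · rintro (⟨h1, _⟩ | ⟨h1, _⟩); exact hw'ne1 j h1; exact hw'T j (by rw [h1]; exact hy)
    -- the missing-edge count decreased
    have hsub : (T.offDiag.filter fun q => ¬ G₁.Adj q.1 q.2) ⊆
        (T.offDiag.filter fun q => ¬ G.Adj q.1 q.2) \ {(x,y),(y,x)} := by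
      intro q hq
      rw [Finset.mem_filter] at hq
      obtain ⟨hqd, hqn⟩ := hq
      rw [Finset.mem_offDiag] at hqd
      obtain ⟨hq1, hq2, hq12⟩ := hqd
      rw [Finset.mem_sdiff, Finset.mem_filter, Finset.mem_offDiag]
      refine ⟨⟨⟨hq1, hq2, hq12⟩, ?_⟩, ?_⟩
      · intro hGq
        apply hqn
        rw [hG₁, switch_adj]
        left
        refine ⟨hGq, ?_, ?_⟩
        · rintro (⟨h1, _⟩ | ⟨_, h2⟩)
          · exact hwT i0 (by rw [← hw0, ← h1]; exact hq1)
          · exact hwT i0 (by rw [← hw0, ← h2]; exact hq2)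
        · rintro (⟨h1, _⟩ | ⟨_, h2⟩)
          · exact hwT i1 (by rw [← hw1, ← h1]; exact hq1)
          · exact hwT i1 (by rw [← hw1, ← h2]; exact hq2)
      · intro hmem
        apply hqn
        rw [hG₁, switch_adj]
        rw [Finset.mem_insert, Finset.mem_singleton] at hmem
        rcases hmem with h | h
        · exact Or.inr ⟨Or.inr (Or.inl ⟨congrArg Prod.fst h, congrArg Prod.snd h⟩),
            by rw [h]; exact hxy⟩
        · exact Or.inr ⟨Or.inr (Or.inr ⟨congrArg Prod.fst h, congrArg Prod.snd h⟩),
            by rw [h]; exact hxy.symm⟩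
    have hpairsub : ({(x,y),(y,x)} : Finset (V × V)) ⊆
        (T.offDiag.filter fun q => ¬ G.Adj q.1 q.2) := by
      intro q hq
      rw [Finset.mem_insert, Finset.mem_singleton] at hq
      rw [Finset.mem_filter, Finset.mem_offDiag]
      rcases hq with rfl | rfl
      · exact ⟨⟨hx, hy, hxy⟩, hnadj⟩
      · exact ⟨⟨hy, hx, hxy.symm⟩, fun h => hnadj h.symm⟩
    have hpaircard : ({(x,y),(y,x)} : Finset (V × V)).card = 2 := by
      rw [Finset.card_insert_of_notMem, Finset.card_singleton]
      rw [Finset.mem_singleton]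
      intro h
      exact hxy (congrArg Prod.fst h)
    have hfilt' : (@Finset.filter _ (fun q => ¬ G₁.Adj q.1 q.2)
        (fun a => @instDecidableNot _ (Classical.propDecidable _)) T.offDiag).card ≤ 2*m := by
      rw [Finset.filter_congr_decidable]
      have h1 := Finset.card_le_card hsub
      rw [Finset.card_sdiff_of_subset hpairsub, hpaircard] at h1
      omega
    obtain ⟨G', hrel, hdeg, f, hf⟩ := ih G₁ T (n-2) w' hw'inj hw'T hw'indep hw'adj hfilt'
      (by omega)
    refine ⟨G', Relation.ReflTransGen.head hsw hrel, fun z => ?_, f, hf⟩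
    rw [hdeg z, hG₁]
    have hd := switch_degree G w0 w1 x y hw01 hxy hw0x hw0y hw1x hw1y hA0x hA1y hN01 hnadj z
    convert hd using 2 <;> exact Subsingleton.elim _ _

end Aux

/-- let `S` be a `k`-set of vertices of `G`, `α, ℓ` positive with
`ℓ = 2·C(k-α,2) + α`, and suppose there are an independent set `w_1,…,w_ℓ`
outside `S` and a `(k-α)`-subset `T` of `S` such that every `w_j` is adjacent
to every vertex of `T`.  Then some sequence of 2-switches transforms `G` into a
graph with the same degree sequence containing `K_{k-α} ∨ K̄_α` as a
subgraph. -/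
theorem stmt17 {V : Type*} [Fintype V] (G : SimpleGraph V)
    (S : Finset V) (k α ℓ : ℕ) (hS : S.card = k)
    (hα : 0 < α) (hℓpos : 0 < ℓ) (hℓ : ℓ = 2 * Nat.choose (k - α) 2 + α)
    (w : Fin ℓ → V) (hwinj : Function.Injective w)
    (hwS : ∀ j, w j ∉ S)
    (hwindep : ∀ j j', j ≠ j' → ¬ G.Adj (w j) (w j'))
    (T : Finset V) (hTS : T ⊆ S) (hT : T.card = k - α)
    (hadj : ∀ j, ∀ x ∈ T, G.Adj (w j) x) :
    ∃ G' : SimpleGraph V, Relation.ReflTransGen TwoSwitch G G' ∧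
      (∀ v, G'.degree v = G.degree v) ∧
      ∃ f : splitGraph (k - α) α →g G', Function.Injective f := by
  classical
  have h3 : ∀ t : ℕ, 2 * Nat.choose t 2 = t * t - t := by
    intro t
    induction t with
    | zero => rfl
    | succ s ihs =>
      have hexp : (s+1)*(s+1) = s*s + 2*s + 1 := by ring
      have hss : s ≤ s * s := by nlinarith
      rw [Nat.choose_succ_succ, Nat.choose_one_right, Nat.mul_add]
      have ihs' : 2 * Nat.choose s (Nat.succ 1) = s * s - s := ihs
      omega
  have hfilt : (T.offDiag.filter fun p => ¬ G.Adj p.1 p.2).card ≤ 2 * Nat.choose (k-α) 2 := by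
    have h1 := Finset.card_filter_le T.offDiag (fun p => ¬ G.Adj p.1 p.2)
    have h2 := Finset.offDiag_card T
    rw [hT] at h2
    rw [h3 (k-α)]
    omega
  rw [← hT]
  exact key α (Nat.choose (k-α) 2) G T ℓ w hwinj (fun j hj => hwS j (hTS hj)) hwindep hadj
    hfilt (by omega)
end
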